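/- Let A and B be real symmetric n×n matrices with A invertible. Then A and B are simultaneously diagonalizable via congruence if and only if A⁻¹B is diagonalizable over ℝ (i.e., similar to a real diagonal matrix). -/

import Mathlib

open Matrix

/-- Two commuting real symmetric matrices are simultaneously orthogonally diagonalizable. -/
lemma joint_diag {n : ℕ} (S D : Matrix (Fin n) (Fin n) ℝ)
    (hS : S.IsSymm) (hD : D.IsSymm) (hSD : S * D = D * S) :
    ∃ (U : Matrix (Fin n) (Fin n) ℝ) (μ ν : Fin n → ℝ), Uᵀ * U = 1 ∧
      Uᵀ * S * U = diagonal μ ∧ Uᵀ * D * U = diagonal ν := by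
  classical
  have hSh : S.IsHermitian := by
    rwa [Matrix.IsHermitian, Matrix.conjTranspose_eq_transpose_of_trivial]
  have hDh : D.IsHermitian := by
    rwa [Matrix.IsHermitian, Matrix.conjTranspose_eq_transpose_of_trivial]
  have hs : (Matrix.toEuclideanLin S).IsSymmetric := Matrix.isHermitian_iff_isSymmetric.mp hSh
  have hd : (Matrix.toEuclideanLin D).IsSymmetric := Matrix.isHermitian_iff_isSymmetric.mp hDh
  have hmul : ∀ (M N : Matrix (Fin n) (Fin n) ℝ),
      Matrix.toEuclideanLin (M * N) = Matrix.toEuclideanLin M * Matrix.toEuclideanLin N := by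
    intro M N
    ext v
    simp [Matrix.toEuclideanLin_apply, Matrix.mulVec_mulVec]
  have hcomm : Commute (Matrix.toEuclideanLin S) (Matrix.toEuclideanLin D) := by
    unfold Commute SemiconjBy
    rw [← hmul, ← hmul, hSD]
  set V : ℝ × ℝ → Submodule ℝ (EuclideanSpace ℝ (Fin n)) := fun i =>
    Module.End.eigenspace (Matrix.toEuclideanLin S) i.2 ⊓
      Module.End.eigenspace (Matrix.toEuclideanLin D) i.1 with hV
  have hinternal : DirectSum.IsInternal V :=
    LinearMap.IsSymmetric.directSum_isInternal_of_commute hs hd hcomm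
  have horth : OrthogonalFamily ℝ (fun i => V i) (fun i => (V i).subtypeₗᵢ) :=
    LinearMap.IsSymmetric.orthogonalFamily_eigenspace_inf_eigenspace hs hd
  have hind : iSupIndep V := hinternal.submodule_iSupIndep
  have hind' : iSupIndep (fun i : {p : ℝ × ℝ // V p ≠ ⊥} => V i.val) :=
    hind.comp Subtype.val_injective
  haveI : Finite {p : ℝ × ℝ // V p ≠ ⊥} :=
    WellFoundedGT.finite_of_iSupIndep hind' (fun i => i.2)
  haveI : Fintype {p : ℝ × ℝ // V p ≠ ⊥} := Fintype.ofFinite _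
  have horth' : OrthogonalFamily ℝ (fun i : {p : ℝ × ℝ // V p ≠ ⊥} => V i.val)
      (fun i => (V i.val).subtypeₗᵢ) := fun i j hij =>
    horth (Subtype.coe_ne_coe.mpr hij)
  have hinternal' : DirectSum.IsInternal (fun i : {p : ℝ × ℝ // V p ≠ ⊥} => V i.val) := by
    rw [DirectSum.isInternal_submodule_iff_iSupIndep_and_iSup_eq_top]
    refine ⟨hind', ?_⟩
    rw [eq_top_iff, ← hinternal.submodule_iSup_eq_top]
    refine iSup_le fun p => ?_
    by_cases hp : V p = ⊥
    · rw [hp]; exact bot_le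
    · exact le_iSup (fun i : {p : ℝ × ℝ // V p ≠ ⊥} => V i.val) ⟨p, hp⟩
  have hn : Module.finrank ℝ (EuclideanSpace ℝ (Fin n)) = n := finrank_euclideanSpace_fin
  set b : OrthonormalBasis (Fin n) ℝ (EuclideanSpace ℝ (Fin n)) :=
    hinternal'.subordinateOrthonormalBasis hn horth' with hb
  set μ : Fin n → ℝ := fun a => (hinternal'.subordinateOrthonormalBasisIndex hn a horth').val.2
  set ν : Fin n → ℝ := fun a => (hinternal'.subordinateOrthonormalBasisIndex hn a horth').val.1
  have hsub : ∀ a, b a ∈ V (hinternal'.subordinateOrthonormalBasisIndex hn a horth').val :=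
    fun a => hinternal'.subordinateOrthonormalBasis_subordinate hn a horth'
  have hms : ∀ a, Matrix.toEuclideanLin S (b a) = μ a • b a := fun a =>
    Module.End.mem_eigenspace_iff.mp (hsub a).1
  have hmd : ∀ a, Matrix.toEuclideanLin D (b a) = ν a • b a := fun a =>
    Module.End.mem_eigenspace_iff.mp (hsub a).2
  have hmvS : ∀ a, S *ᵥ ⇑(b a) = μ a • ⇑(b a) := by
    intro a
    have := congrArg (WithLp.equiv 2 (Fin n → ℝ)) (hms a)
    rw [Matrix.toEuclideanLin_apply] at this
    simpa using this
  have hmvD : ∀ a, D *ᵥ ⇑(b a) = ν a • ⇑(b a) := by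
    intro a
    have := congrArg (WithLp.equiv 2 (Fin n → ℝ)) (hmd a)
    rw [Matrix.toEuclideanLin_apply] at this
    simpa using this
  set U : Matrix (Fin n) (Fin n) ℝ :=
    (EuclideanSpace.basisFun (Fin n) ℝ).toBasis.toMatrix ⇑b with hUdef
  have hUmem : U ∈ Matrix.unitaryGroup (Fin n) ℝ :=
    (EuclideanSpace.basisFun (Fin n) ℝ).toMatrix_orthonormalBasis_mem_unitary b
  have hstarU : star U = Uᵀ := by
    rw [Matrix.star_eq_conjTranspose, Matrix.conjTranspose_eq_transpose_of_trivial]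
  have hU1 : Uᵀ * U = 1 := by
    rw [← hstarU]
    exact Matrix.mem_unitaryGroup_iff'.mp hUmem
  have hUapp : ∀ i j, U i j = b j i := by
    intro i j
    simp [hUdef, Module.Basis.toMatrix_apply]
  have key : ∀ (M : Matrix (Fin n) (Fin n) ℝ) (w : Fin n → ℝ),
      (∀ a, M *ᵥ ⇑(b a) = w a • ⇑(b a)) → Uᵀ * M * U = diagonal w := by
    intro M w hw
    have hMU : M * U = U * diagonal w := by
      ext l j
      have h1 : (M * U) l j = (M *ᵥ ⇑(b j)) l := by
        simp [Matrix.mul_apply, Matrix.mulVec, dotProduct, hUapp]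
      rw [h1, hw j]
      simp [Matrix.mul_diagonal, hUapp, mul_comm]
    rw [Matrix.mul_assoc, hMU, ← Matrix.mul_assoc, hU1, one_mul]
  exact ⟨U, μ, ν, hU1, key S μ hmvS, key D ν hmvD⟩

theorem stmt_1 (n : ℕ) (A B : Matrix (Fin n) (Fin n) ℝ)
    (hA : A.IsSymm) (hB : B.IsSymm) (hAinv : IsUnit A) :
    (∃ P : Matrix (Fin n) (Fin n) ℝ, IsUnit P ∧
        (Pᵀ * A * P).IsDiag ∧ (Pᵀ * B * P).IsDiag) ↔
      (∃ (Q D : Matrix (Fin n) (Fin n) ℝ), IsUnit Q ∧ D.IsDiag ∧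
        Q⁻¹ * (A⁻¹ * B) * Q = D) := by
  have hAd : IsUnit A.det := (Matrix.isUnit_iff_isUnit_det A).mp hAinv
  constructor
  · rintro ⟨P, hP, h1, h2⟩
    have hPd : IsUnit P.det := (Matrix.isUnit_iff_isUnit_det P).mp hP
    have hPtd : IsUnit Pᵀ.det := by rwa [Matrix.det_transpose]
    refine ⟨P, (Pᵀ * A * P)⁻¹ * (Pᵀ * B * P), hP, ?_, ?_⟩
    · rw [← h1.diagonal_diag, ← h2.diagonal_diag, Matrix.inv_diagonal,
        Matrix.diagonal_mul_diagonal]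
      exact Matrix.isDiag_diagonal _
    · rw [Matrix.mul_inv_rev, Matrix.mul_inv_rev]
      symm
      calc P⁻¹ * (A⁻¹ * Pᵀ⁻¹) * (Pᵀ * B * P)
          = P⁻¹ * (A⁻¹ * (Pᵀ⁻¹ * (Pᵀ * (B * P)))) := by
            simp only [Matrix.mul_assoc]
        _ = P⁻¹ * (A⁻¹ * (B * P)) := by
            rw [Matrix.nonsing_inv_mul_cancel_left _ _ hPtd]
        _ = P⁻¹ * (A⁻¹ * B) * P := by simp only [Matrix.mul_assoc]
  · rintro ⟨Q, D, hQ, hDdiag, hEq⟩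
    have hQd : IsUnit Q.det := (Matrix.isUnit_iff_isUnit_det Q).mp hQ
    have hAiB : A⁻¹ * B = Q * D * Q⁻¹ := by
      rw [← hEq]
      symm
      calc Q * (Q⁻¹ * (A⁻¹ * B) * Q) * Q⁻¹
          = Q * (Q⁻¹ * ((A⁻¹ * B) * (Q * Q⁻¹))) := by simp only [Matrix.mul_assoc]
        _ = A⁻¹ * B := by
            rw [Matrix.mul_nonsing_inv _ hQd, Matrix.mul_one,
              Matrix.mul_nonsing_inv_cancel_left _ _ hQd]
    have hB' : B = A * (Q * D * Q⁻¹) := by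
      rw [← hAiB, Matrix.mul_nonsing_inv_cancel_left _ _ hAd]
    set S := Qᵀ * A * Q with hSdef
    have hT : Qᵀ * B * Q = S * D := by
      rw [hB']
      calc Qᵀ * (A * (Q * D * Q⁻¹)) * Q
          = Qᵀ * A * Q * D * (Q⁻¹ * Q) := by simp only [Matrix.mul_assoc]
        _ = S * D := by rw [Matrix.nonsing_inv_mul _ hQd, Matrix.mul_one]
    have hSsymm : S.IsSymm := by
      rw [Matrix.IsSymm, hSdef, Matrix.transpose_mul, Matrix.transpose_mul,
        Matrix.transpose_transpose, hA, Matrix.mul_assoc]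
    have hTsymm : (S * D).IsSymm := by
      rw [← hT, Matrix.IsSymm, Matrix.transpose_mul, Matrix.transpose_mul,
        Matrix.transpose_transpose, hB, Matrix.mul_assoc]
    have hcomm : S * D = D * S := by
      conv_lhs => rw [← hTsymm]
      rw [Matrix.transpose_mul, hDdiag.isSymm, hSsymm]
    obtain ⟨U, μ, ν, hU1, hUS, hUD⟩ := joint_diag S D hSsymm hDdiag.isSymm hcomm
    have hU2 : U * Uᵀ = 1 := mul_eq_one_comm.mp hU1
    have hUunit : IsUnit U := by
      rw [Matrix.isUnit_iff_isUnit_det]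
      have hdet : U.det * Uᵀ.det = 1 := by rw [← Matrix.det_mul, hU2, Matrix.det_one]
      exact isUnit_iff_exists_inv.mpr ⟨_, hdet⟩
    refine ⟨Q * U, hQ.mul hUunit, ?_, ?_⟩
    · have : (Q * U)ᵀ * A * (Q * U) = Uᵀ * S * U := by
        rw [Matrix.transpose_mul, hSdef]
        simp only [Matrix.mul_assoc]
      rw [this, hUS]
      exact Matrix.isDiag_diagonal _
    · have h3 : (Q * U)ᵀ * B * (Q * U) = Uᵀ * (S * D) * U := by
        rw [← hT, Matrix.transpose_mul]
        simp only [Matrix.mul_assoc]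
      have h4 : Uᵀ * (S * D) * U = diagonal μ * diagonal ν := by
        rw [← hUS, ← hUD]
        symm
        simp only [Matrix.mul_assoc]
        rw [← Matrix.mul_assoc U Uᵀ, hU2, Matrix.one_mul]
      rw [h3, h4, Matrix.diagonal_mul_diagonal]
      exact Matrix.isDiag_diagonal _
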